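/- Consider the parameter-error dynamics φ̇(t) = −u(t)uᵀ(t)φ(t) where u is piecewise continuous, bounded by u_max, and persistently exciting with constants α, T. Then along solutions, the Lyapunov function V(t) = ½‖φ(t)‖² satisfies V(t+T) ≤ (1 − 2α²/(u_max²·T·(1+u_max²T)²))·V(t) for all t≥t₀. -/

import Mathlib

open RealInnerProductSpace

set_option maxHeartbeats 1000000 in
/-- for φ̇ = −u uᵀ φ with u bounded and PE, the Lyapunov function
V = ½‖φ‖² contracts over each window of length T:
V(t+T) ≤ (1 − 2α²/(u_max²·T·(1+u_max²T)²))·V(t). -/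
theorem lyapunov_contraction_over_window {n : ℕ}
    (u : ℝ → EuclideanSpace ℝ (Fin n)) (φ : ℝ → EuclideanSpace ℝ (Fin n))
    (t₀ T α umax : ℝ) (hT : 0 < T) (hα : 0 < α) (humax : 0 < umax)
    (hbound : ∀ t, t₀ ≤ t → ‖u t‖ ≤ umax)
    (hPE : ∀ w : EuclideanSpace ℝ (Fin n), ‖w‖ = 1 → ∀ t, t₀ ≤ t →
      α ≤ ∫ τ in t..(t + T), ⟪u τ, w⟫ ^ 2)
    (hODE : ∀ t, t₀ ≤ t → HasDerivAt φ (-(⟪u t, φ t⟫ • u t)) t) :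
    ∀ t, t₀ ≤ t →
      (1 / 2) * ‖φ (t + T)‖ ^ 2 ≤
        (1 - 2 * α ^ 2 / (umax ^ 2 * T * (1 + umax ^ 2 * T) ^ 2)) *
          ((1 / 2) * ‖φ t‖ ^ 2) := by
  intro t ht
  have hle : t ≤ t + T := by linarith
  set F : ℝ → ℝ := fun τ => ⟪u τ, φ τ⟫ with hFdef
  -- derivative of the squared norm
  have hV : ∀ s, t₀ ≤ s → HasDerivAt (fun r => ‖φ r‖ ^ 2) (-(2 * F s ^ 2)) s := by
    intro s hs
    have h1 := HasDerivAt.inner ℝ (hODE s hs) (hODE s hs)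
    have h2 : (fun r => ‖φ r‖ ^ 2) = fun r : ℝ => (⟪φ r, φ r⟫ : ℝ) := by
      funext r; rw [real_inner_self_eq_norm_sq]
    rw [h2]
    refine h1.congr_deriv ?_
    simp only [inner_neg_right, inner_neg_left, real_inner_smul_right, real_inner_smul_left,
      real_inner_comm (u s) (φ s), hFdef]
    ring
  -- the squared norm is nonincreasing
  have hAnti : AntitoneOn (fun r => ‖φ r‖ ^ 2) (Set.Ici t₀) := by
    apply antitoneOn_of_deriv_nonpos (convex_Ici t₀)
    · intro s hs; exact ((hV s hs).continuousAt).continuousWithinAt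
    · intro s hs
      rw [interior_Ici] at hs
      exact ((hV s hs.le).differentiableAt).differentiableWithinAt
    · intro s hs
      rw [interior_Ici] at hs
      rw [(hV s hs.le).deriv]
      nlinarith [sq_nonneg (F s)]
  have hmono2 : ∀ s, t ≤ s → ‖φ s‖ ^ 2 ≤ ‖φ t‖ ^ 2 := fun s hs =>
    hAnti (Set.mem_Ici.mpr ht) (Set.mem_Ici.mpr (ht.trans hs)) hs
  set r : ℝ := ‖φ t‖ with hrdef
  have hr0 : 0 ≤ r := norm_nonneg _
  by_cases hr : r = 0
  · -- trivial case: φ t = 0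
    have h1 : ‖φ (t + T)‖ ^ 2 ≤ r ^ 2 := hmono2 _ hle
    rw [hr] at h1
    have h2 : (0:ℝ) ≤ ‖φ (t + T)‖ ^ 2 := sq_nonneg _
    have h3 : ‖φ (t + T)‖ ^ 2 = 0 := le_antisymm (by simpa using h1) h2
    rw [h3, hr]
    norm_num
  have hrpos : 0 < r := lt_of_le_of_ne hr0 (Ne.symm hr)
  -- measurability infrastructure
  have hDmeas : Measurable (deriv φ) := measurable_deriv φ
  have hφcont : ContinuousOn φ (Set.Ici t₀) := fun s hs =>
    ((hODE s hs).continuousAt).continuousWithinAt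
  set G : ℝ → ℝ := fun τ => -⟪deriv φ τ, φ τ⟫ with hGdef
  have hderiv : ∀ s, t₀ ≤ s → deriv φ s = -(F s • u s) := fun s hs => (hODE s hs).deriv
  have hGF : ∀ s, t₀ ≤ s → G s = F s ^ 2 := by
    intro s hs
    simp only [hGdef, hderiv s hs, inner_neg_left, real_inner_smul_left, hFdef,
      real_inner_comm (u s) (φ s)]
    ring
  have hG0 : ∀ s, t₀ ≤ s → 0 ≤ G s := fun s hs => by rw [hGF s hs]; exact sq_nonneg _
  have hGb : ∀ s, t₀ ≤ s → t ≤ s → G s ≤ (umax * r) ^ 2 := by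
    intro s hs hts
    rw [hGF s hs]
    have h1 : |F s| ≤ ‖u s‖ * ‖φ s‖ := abs_real_inner_le_norm _ _
    have h2 : ‖u s‖ ≤ umax := hbound s hs
    have h3 : ‖φ s‖ ^ 2 ≤ r ^ 2 := hmono2 s hts
    have h4 : ‖φ s‖ ≤ r := by nlinarith [norm_nonneg (φ s)]
    have h5 : |F s| ≤ umax * r :=
      h1.trans (mul_le_mul h2 h4 (norm_nonneg _) humax.le)
    calc F s ^ 2 = |F s| ^ 2 := (sq_abs _).symm
      _ ≤ (umax * r) ^ 2 := by nlinarith [abs_nonneg (F s)]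
  have hIoc_sub : Set.Ioc t (t + T) ⊆ Set.Ici t₀ := fun s hs => ht.trans hs.1.le
  have huIoc : Set.uIoc t (t + T) = Set.Ioc t (t + T) := Set.uIoc_of_le hle
  have huIcc : Set.uIcc t (t + T) = Set.Icc t (t + T) := Set.uIcc_of_le hle
  have hφaesm : MeasureTheory.AEStronglyMeasurable φ (MeasureTheory.volume.restrict (Set.Ioc t (t + T))) :=
    (hφcont.mono hIoc_sub).aestronglyMeasurable measurableSet_Ioc
  have hGaesm : MeasureTheory.AEStronglyMeasurable G (MeasureTheory.volume.restrict (Set.Ioc t (t + T))) :=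
    (MeasureTheory.AEStronglyMeasurable.inner (𝕜 := ℝ) hDmeas.aestronglyMeasurable.restrict hφaesm).neg
  have hsqrtGaesm : MeasureTheory.AEStronglyMeasurable (fun τ => Real.sqrt (G τ))
      (MeasureTheory.volume.restrict (Set.Ioc t (t + T))) :=
    Real.continuous_sqrt.comp_aestronglyMeasurable hGaesm
  -- interval integrability of G
  have hGint : IntervalIntegrable G MeasureTheory.volume t (t + T) := by
    apply IntervalIntegrable.mono_fun' (g := fun _ => (umax * r) ^ 2) intervalIntegrable_const
    · rw [huIoc]; exact hGaesm
    · rw [huIoc]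
      apply MeasureTheory.ae_restrict_of_forall_mem measurableSet_Ioc
      intro s hs
      have h1 := hG0 s (hIoc_sub hs)
      have h2 := hGb s (hIoc_sub hs) hs.1.le
      show ‖G s‖ ≤ (umax * r) ^ 2
      rw [Real.norm_eq_abs, abs_of_nonneg h1]; exact h2
  have hsqrtGint : IntervalIntegrable (fun τ => Real.sqrt (G τ)) MeasureTheory.volume t (t + T) := by
    apply IntervalIntegrable.mono_fun' (g := fun _ => umax * r) intervalIntegrable_const
    · rw [huIoc]; exact hsqrtGaesm
    · rw [huIoc]
      apply MeasureTheory.ae_restrict_of_forall_mem measurableSet_Ioc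
      intro s hs
      show ‖Real.sqrt (G s)‖ ≤ umax * r
      rw [Real.norm_eq_abs, abs_of_nonneg (Real.sqrt_nonneg _)]
      have h2 := hGb s (hIoc_sub hs) hs.1.le
      calc Real.sqrt (G s) ≤ Real.sqrt ((umax * r) ^ 2) := Real.sqrt_le_sqrt h2
        _ = umax * r := by rw [Real.sqrt_sq (by positivity)]
  set S : ℝ := ∫ τ in t..(t + T), G τ with hSdef
  set I : ℝ := ∫ τ in t..(t + T), Real.sqrt (G τ) with hIdef
  have hS0 : 0 ≤ S := by
    apply intervalIntegral.integral_nonneg hle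
    intro s hs; exact hG0 s (ht.trans hs.1)
  have hI0 : 0 ≤ I :=
    intervalIntegral.integral_nonneg hle (fun s _ => Real.sqrt_nonneg _)
  -- fundamental theorem of calculus for the squared norm
  have hW : ‖φ (t + T)‖ ^ 2 = r ^ 2 - 2 * S := by
    have hd : ∀ s ∈ Set.uIcc t (t + T),
        HasDerivAt (fun r => ‖φ r‖ ^ 2) (-2 * G s) s := by
      intro s hs
      rw [huIcc] at hs
      have hs0 : t₀ ≤ s := ht.trans hs.1
      have := hV s hs0
      rw [hGF s hs0]; convert this using 1; ring
    have hftc := intervalIntegral.integral_eq_sub_of_hasDerivAt hd (hGint.const_mul (-2))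
    have h2 : ∫ s in t..(t + T), (-2 * G s) = -2 * S := by
      rw [hSdef, ← intervalIntegral.integral_const_mul]
    rw [h2] at hftc
    linarith
  -- integrability of deriv φ
  have hDint : IntervalIntegrable (deriv φ) MeasureTheory.volume t (t + T) := by
    apply IntervalIntegrable.mono_fun' (g := fun _ => umax * (umax * r)) intervalIntegrable_const
    · exact hDmeas.aestronglyMeasurable.restrict
    · rw [huIoc]
      apply MeasureTheory.ae_restrict_of_forall_mem measurableSet_Ioc
      intro s hs
      have hs0 : t₀ ≤ s := hIoc_sub hs
      show ‖deriv φ s‖ ≤ umax * (umax * r)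
      rw [hderiv s hs0]
      have h1 : ‖-(F s • u s)‖ = |F s| * ‖u s‖ := by
        rw [norm_neg, norm_smul, Real.norm_eq_abs]
      rw [h1]
      have h2 : |F s| ≤ umax * r := by
        have := hGb s hs0 hs.1.le
        rw [hGF s hs0] at this
        nlinarith [abs_nonneg (F s), sq_abs (F s), mul_pos humax hrpos]
      calc |F s| * ‖u s‖ ≤ (umax * r) * umax :=
            mul_le_mul h2 (hbound s hs0) (norm_nonneg _) (by positivity)
        _ = umax * (umax * r) := by ring
  -- bound on the drift of φ
  have hsub : ∀ τ ∈ Set.Icc t (t + T), ‖φ τ - φ t‖ ≤ umax * I := by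
    intro τ hτ
    have hIτ : IntervalIntegrable (deriv φ) MeasureTheory.volume t τ := by
      apply hDint.mono_set
      rw [huIcc, Set.uIcc_of_le hτ.1]
      exact Set.Icc_subset_Icc le_rfl hτ.2
    have hdφ : ∀ s ∈ Set.uIcc t τ, HasDerivAt φ (deriv φ s) s := by
      intro s hs
      rw [Set.uIcc_of_le hτ.1] at hs
      have hs0 : t₀ ≤ s := ht.trans hs.1
      exact ((hODE s hs0).differentiableAt).hasDerivAt
    have hftcφ := intervalIntegral.integral_eq_sub_of_hasDerivAt hdφ hIτ
    rw [← hftcφ]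
    calc ‖∫ s in t..τ, deriv φ s‖ ≤ ∫ s in t..τ, ‖deriv φ s‖ :=
          intervalIntegral.norm_integral_le_integral_norm hτ.1
      _ ≤ ∫ s in t..τ, umax * Real.sqrt (G s) := by
          have hsub2 : Set.uIcc t τ ⊆ Set.uIcc t (t + T) := by
            rw [huIcc, Set.uIcc_of_le hτ.1]
            exact Set.Icc_subset_Icc le_rfl hτ.2
          apply intervalIntegral.integral_mono_on hτ.1 hIτ.norm
            ((hsqrtGint.mono_set hsub2).const_mul umax)
          intro s hs
          have hs0 : t₀ ≤ s := ht.trans hs.1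
          rw [hderiv s hs0, norm_neg, norm_smul, Real.norm_eq_abs]
          have h3 : |F s| = Real.sqrt (G s) := by
            rw [hGF s hs0, Real.sqrt_sq_eq_abs]
          rw [h3, mul_comm umax _]
          exact mul_le_mul_of_nonneg_left (hbound s hs0) (Real.sqrt_nonneg _)
      _ = umax * ∫ s in t..τ, Real.sqrt (G s) := intervalIntegral.integral_const_mul _ _
      _ ≤ umax * I := by
          apply mul_le_mul_of_nonneg_left _ humax.le
          apply intervalIntegral.integral_mono_interval le_rfl hτ.1 hτ.2
          · exact MeasureTheory.ae_restrict_of_forall_mem measurableSet_Ioc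
              (fun s _ => Real.sqrt_nonneg _)
          · exact hsqrtGint
  -- persistency of excitation applied to the direction of φ t
  set w : EuclideanSpace ℝ (Fin n) := r⁻¹ • φ t with hwdef
  have hwnorm : ‖w‖ = 1 := by
    rw [hwdef, norm_smul, Real.norm_eq_abs, abs_of_pos (inv_pos.mpr hrpos), ← hrdef]
    field_simp
  have hPE' := hPE w hwnorm t ht
  set h : ℝ → ℝ := fun τ => (⟪u τ, φ t⟫ : ℝ) ^ 2 with hhdef
  have hPEh : α * r ^ 2 ≤ ∫ τ in t..(t + T), h τ := by
    have e1 : (fun τ => (⟪u τ, w⟫ : ℝ) ^ 2) = fun τ => (r⁻¹) ^ 2 * h τ := by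
      funext τ
      rw [hwdef, real_inner_smul_right, hhdef]
      ring
    rw [e1] at hPE'
    have e2 : ∫ τ in t..(t + T), (r⁻¹) ^ 2 * h τ = (r⁻¹) ^ 2 * ∫ τ in t..(t + T), h τ :=
      intervalIntegral.integral_const_mul _ _
    rw [e2] at hPE'
    have e3 : (r⁻¹) ^ 2 * (∫ τ in t..(t + T), h τ) * r ^ 2 = ∫ τ in t..(t + T), h τ := by
      field_simp
    have e4 := mul_le_mul_of_nonneg_right hPE' (sq_nonneg r)
    linarith [e4, e3.le, e3.ge]
  -- h must be interval integrable
  have hhint : IntervalIntegrable h MeasureTheory.volume t (t + T) := by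
    by_contra hc
    rw [intervalIntegral.integral_undef hc] at hPEh
    nlinarith [mul_pos hα (pow_pos hrpos 2)]
  -- α ≤ umax² T
  have hαle : α ≤ umax ^ 2 * T := by
    have h1 : ∫ τ in t..(t + T), h τ ≤ ∫ τ in t..(t + T), (umax * r) ^ 2 := by
      apply intervalIntegral.integral_mono_on hle hhint intervalIntegrable_const
      intro s hs
      have hs0 : t₀ ≤ s := ht.trans hs.1
      have h2 : |(⟪u s, φ t⟫ : ℝ)| ≤ umax * r :=
        (abs_real_inner_le_norm _ _).trans
          (mul_le_mul (hbound s hs0) le_rfl hr0 humax.le)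
      show (⟪u s, φ t⟫ : ℝ) ^ 2 ≤ (umax * r) ^ 2
      calc (⟪u s, φ t⟫ : ℝ) ^ 2 = |(⟪u s, φ t⟫ : ℝ)| ^ 2 := (sq_abs _).symm
        _ ≤ (umax * r) ^ 2 := by nlinarith [abs_nonneg (⟪u s, φ t⟫ : ℝ)]
    rw [intervalIntegral.integral_const, smul_eq_mul] at h1
    have h3 : α * r ^ 2 ≤ (t + T - t) * (umax * r) ^ 2 := hPEh.trans h1
    have h4 : (t + T - t) * (umax * r) ^ 2 = umax ^ 2 * T * r ^ 2 := by ring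
    rw [h4] at h3
    exact le_of_mul_le_mul_right h3 (pow_pos hrpos 2)
  -- pointwise bound: |⟪u τ, φ t⟫| ≤ √(G τ) + umax² I
  set c : ℝ := umax ^ 2 * I with hcdef
  have hc0 : 0 ≤ c := by positivity
  have hpt : ∀ τ ∈ Set.Icc t (t + T), h τ ≤ (Real.sqrt (G τ) + c) ^ 2 := by
    intro τ hτ
    have hτ0 : t₀ ≤ τ := ht.trans hτ.1
    have e1 : (⟪u τ, φ t⟫ : ℝ) = F τ + ⟪u τ, φ t - φ τ⟫ := by
      rw [hFdef]; simp only [inner_sub_right]; ring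
    have e2 : |(⟪u τ, φ t - φ τ⟫ : ℝ)| ≤ umax * (umax * I) := by
      apply (abs_real_inner_le_norm _ _).trans
      apply mul_le_mul (hbound τ hτ0) _ (norm_nonneg _) humax.le
      rw [norm_sub_rev]; exact hsub τ hτ
    have e3 : |F τ| = Real.sqrt (G τ) := by rw [hGF τ hτ0, Real.sqrt_sq_eq_abs]
    have e4 : |(⟪u τ, φ t⟫ : ℝ)| ≤ Real.sqrt (G τ) + c := by
      rw [e1]
      calc |F τ + (⟪u τ, φ t - φ τ⟫ : ℝ)| ≤ |F τ| + |(⟪u τ, φ t - φ τ⟫ : ℝ)| := abs_add_le _ _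
        _ ≤ Real.sqrt (G τ) + c := by
            rw [e3, hcdef]; have := e2; nlinarith
    show (⟪u τ, φ t⟫ : ℝ) ^ 2 ≤ (Real.sqrt (G τ) + c) ^ 2
    calc (⟪u τ, φ t⟫ : ℝ) ^ 2 = |(⟪u τ, φ t⟫ : ℝ)| ^ 2 := (sq_abs _).symm
      _ ≤ (Real.sqrt (G τ) + c) ^ 2 := by
          nlinarith [abs_nonneg (⟪u τ, φ t⟫ : ℝ), Real.sqrt_nonneg (G τ), e4]
  -- integrability of the right-hand side
  have hRHSaesm : MeasureTheory.AEStronglyMeasurable (fun τ => (Real.sqrt (G τ) + c) ^ 2)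
      (MeasureTheory.volume.restrict (Set.Ioc t (t + T))) := by
    have h1 := hsqrtGaesm.add (MeasureTheory.aestronglyMeasurable_const (b := c))
    simpa only [sq, Pi.add_def, Pi.mul_def] using h1.mul h1
  have hRHSint : IntervalIntegrable (fun τ => (Real.sqrt (G τ) + c) ^ 2)
      MeasureTheory.volume t (t + T) := by
    apply IntervalIntegrable.mono_fun' (g := fun _ => (umax * r + c) ^ 2) intervalIntegrable_const
    · rw [huIoc]; exact hRHSaesm
    · rw [huIoc]
      apply MeasureTheory.ae_restrict_of_forall_mem measurableSet_Ioc
      intro s hs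
      have hs0 : t₀ ≤ s := hIoc_sub hs
      show ‖(Real.sqrt (G s) + c) ^ 2‖ ≤ (umax * r + c) ^ 2
      have h2 : Real.sqrt (G s) ≤ umax * r := by
        calc Real.sqrt (G s) ≤ Real.sqrt ((umax * r) ^ 2) :=
              Real.sqrt_le_sqrt (hGb s hs0 hs.1.le)
          _ = umax * r := by rw [Real.sqrt_sq (by positivity)]
      rw [Real.norm_eq_abs, abs_of_nonneg (by positivity)]
      nlinarith [Real.sqrt_nonneg (G s)]
  -- expand the square integral
  have hexp : ∫ τ in t..(t + T), (Real.sqrt (G τ) + c) ^ 2 = S + 2 * c * I + c ^ 2 * T := by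
    have e1 : ∫ τ in t..(t + T), (Real.sqrt (G τ) + c) ^ 2
        = ∫ τ in t..(t + T), (G τ + ((2 * c) * Real.sqrt (G τ) + c ^ 2)) := by
      apply intervalIntegral.integral_congr
      intro τ hτ
      rw [huIcc] at hτ
      have hτ0 : t₀ ≤ τ := ht.trans hτ.1
      have h5 : Real.sqrt (G τ) ^ 2 = G τ := Real.sq_sqrt (hG0 τ hτ0)
      show (Real.sqrt (G τ) + c) ^ 2 = G τ + ((2 * c) * Real.sqrt (G τ) + c ^ 2)
      rw [add_sq, h5]; ring
    rw [e1]
    rw [intervalIntegral.integral_add hGint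
      (((hsqrtGint.const_mul (2 * c))).add intervalIntegrable_const)]
    rw [intervalIntegral.integral_add (hsqrtGint.const_mul (2 * c)) intervalIntegrable_const]
    rw [intervalIntegral.integral_const_mul, intervalIntegral.integral_const, smul_eq_mul]
    rw [← hSdef, ← hIdef]
    ring
  -- main inequality: α r² ≤ ∫ h ≤ S + 2cI + c²T
  have hmain0 : α * r ^ 2 ≤ S + 2 * c * I + c ^ 2 * T := by
    have h1 : ∫ τ in t..(t + T), h τ ≤ ∫ τ in t..(t + T), (Real.sqrt (G τ) + c) ^ 2 :=
      intervalIntegral.integral_mono_on hle hhint hRHSint hpt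
    rw [hexp] at h1
    linarith [hPEh]
  -- Cauchy–Schwarz: I² ≤ T S
  have hCS : I ^ 2 ≤ T * S := by
    have key : ∀ lam : ℝ, 2 * lam * I ≤ S + lam ^ 2 * T := by
      intro lam
      have h1 : ∫ τ in t..(t + T), (2 * lam) * Real.sqrt (G τ)
          ≤ ∫ τ in t..(t + T), (G τ + lam ^ 2) := by
        apply intervalIntegral.integral_mono_on hle (hsqrtGint.const_mul (2 * lam))
          (hGint.add intervalIntegrable_const)
        intro s hs
        have hs0 : t₀ ≤ s := ht.trans hs.1
        have h2 : Real.sqrt (G s) ^ 2 = G s := Real.sq_sqrt (hG0 s hs0)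
        nlinarith [sq_nonneg (Real.sqrt (G s) - lam)]
      rw [intervalIntegral.integral_const_mul,
        intervalIntegral.integral_add hGint intervalIntegrable_const,
        intervalIntegral.integral_const, smul_eq_mul, ← hSdef, ← hIdef] at h1
      nlinarith [h1]
    rcases eq_or_lt_of_le hI0 with hI | hI
    · nlinarith
    · have h2 := key (I / T)
      have e1 : 2 * (I / T) * I = 2 * (I ^ 2 / T) := by ring
      have e2 : (I / T) ^ 2 * T = I ^ 2 / T := by field_simp
      rw [e1, e2] at h2
      have h3 : I ^ 2 / T ≤ S := by linarith
      exact (div_le_iff₀ hT).mp h3 |>.trans_eq (mul_comm S T)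
  -- combine: α r² ≤ S (1 + umax² T)²
  have hmain : α * r ^ 2 ≤ S * (1 + umax ^ 2 * T) ^ 2 := by
    have h1 : (2 * umax ^ 2 + umax ^ 4 * T) * I ^ 2
        ≤ (2 * umax ^ 2 + umax ^ 4 * T) * (T * S) :=
      mul_le_mul_of_nonneg_left hCS (by positivity)
    have h2 : 2 * c * I + c ^ 2 * T = (2 * umax ^ 2) * I ^ 2 + (umax ^ 4 * T) * I ^ 2 := by
      rw [hcdef]; ring
    nlinarith [hmain0]
  -- final algebra
  have hD : (0:ℝ) < umax ^ 2 * T * (1 + umax ^ 2 * T) ^ 2 := by positivity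
  have hfin : α ^ 2 * r ^ 2 ≤ S * (umax ^ 2 * T * (1 + umax ^ 2 * T) ^ 2) := by
    have h1 : α * (α * r ^ 2) ≤ α * (S * (1 + umax ^ 2 * T) ^ 2) :=
      mul_le_mul_of_nonneg_left hmain hα.le
    have h2 : α * (S * (1 + umax ^ 2 * T) ^ 2) ≤ (umax ^ 2 * T) * (S * (1 + umax ^ 2 * T) ^ 2) :=
      mul_le_mul_of_nonneg_right hαle (by positivity)
    nlinarith [h1, h2]
  have hgoal : α ^ 2 * r ^ 2 / (umax ^ 2 * T * (1 + umax ^ 2 * T) ^ 2) ≤ S :=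
    (div_le_iff₀ hD).mpr hfin
  rw [hW]
  have e : (1 - 2 * α ^ 2 / (umax ^ 2 * T * (1 + umax ^ 2 * T) ^ 2)) * (1 / 2 * r ^ 2)
      = 1 / 2 * r ^ 2 - α ^ 2 * r ^ 2 / (umax ^ 2 * T * (1 + umax ^ 2 * T) ^ 2) := by
    ring
  rw [e]
  linarith
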